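/- Let G be a graph on n vertices with m ≥ 1, and let q(x,y) be the number of walks of length m from x to y. Then ∑_{x,y ∈ V(G)} q(x,y) equals the number of walks of length m in G, which is at least (2|E(G)|/n²)^m · n^{m+1}. -/

import Mathlib

open Finset
open scoped Classical

/-- Number of edges of `G` spanned by the vertex set `X`. -/
noncomputable def edgesIn {V : Type*} [Fintype V] (G : SimpleGraph V) (X : Finset V) : ℕ :=
  (G.edgeFinset.filter (fun e => ∀ v ∈ e, v ∈ X)).card

/-- `G` is `(ε, d)`-dense: every vertex set `X` with `|X| ≥ ε n` spans at least
`(d/2)|X|²` edges. -/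
def IsEpsDense {V : Type*} [Fintype V] (G : SimpleGraph V) (ε d : ℝ) : Prop :=
  ∀ X : Finset V, ε * (Fintype.card V : ℝ) ≤ (X.card : ℝ) →
    d / 2 * (X.card : ℝ) ^ 2 ≤ (edgesIn G X : ℝ)

/-- The number of closed walks of length `r` in `G`, i.e. of sequences
`(x₁, …, x_r)` with all consecutive pairs (cyclically) adjacent. -/
noncomputable def closedWalkCount {V : Type*} [Fintype V] (G : SimpleGraph V) (r : ℕ) : ℕ :=
  (Finset.univ.filter (fun x : Fin r → V => ∀ i, G.Adj (x i) (x (finRotate r i)))).card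

/-- The number of walks of length `m` from `x` to `y` in `G`. -/
noncomputable def walkCount {V : Type*} [Fintype V] (G : SimpleGraph V) (m : ℕ) (x y : V) : ℕ :=
  (Finset.univ.filter (fun a : Fin (m + 1) → V =>
    a 0 = x ∧ a (Fin.last m) = y ∧ ∀ i : Fin m, G.Adj (a i.castSucc) (a i.succ))).card

/-- The number of homomorphisms from the path with `k` edges into `G`. -/
noncomputable def pathHomCount {V : Type*} [Fintype V] (G : SimpleGraph V) (k : ℕ) : ℕ :=
  (Finset.univ.filter (fun a : Fin (k + 1) → V =>
    ∀ i : Fin k, G.Adj (a i.castSucc) (a i.succ))).card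

/-- `∑_{xy ∈ E(G)} f(x) f(y)`, summed over unordered edges. -/
noncomputable def edgeSum {V : Type*} [Fintype V] (G : SimpleGraph V) (f : V → ℝ) : ℝ :=
  ∑ e ∈ G.edgeFinset, Sym2.lift ⟨fun x y => f x * f y, fun x y => mul_comm _ _⟩ e

namespace BlakleyRoyAux

variable {V : Type*} [Fintype V] (G : SimpleGraph V)

/-- The set of walks of length `k` (as tuples). -/
noncomputable def Wk (k : ℕ) : Finset (Fin (k + 1) → V) :=
  Finset.univ.filter (fun a : Fin (k + 1) → V =>
    ∀ i : Fin k, G.Adj (a i.castSucc) (a i.succ))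

/-- Twice the number of edges, as a real number. -/
noncomputable def E2 : ℝ := ∑ x : V, (G.degree x : ℝ)

/-- The neighbors of `y`, as a finset. -/
noncomputable def nb (y : V) : Finset V := Finset.univ.filter (fun x => G.Adj y x)

lemma card_nb (y : V) : (nb G y).card = G.degree y := by
  classical
  have h : nb G y = G.neighborFinset y := by
    ext x; simp [nb, SimpleGraph.mem_neighborFinset]
  rw [h, SimpleGraph.card_neighborFinset_eq_degree]

/-- The stationary random walk weight on tuples. -/
noncomputable def qw : (k : ℕ) → (Fin (k + 1) → V) → ℝ
  | 0, a => (G.degree (a 0) : ℝ) / E2 G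
  | (_ + 1), a => ((G.degree (Fin.tail a 0) : ℝ))⁻¹ * qw _ (Fin.tail a)

lemma qw_zero (a : Fin 1 → V) : qw G 0 a = (G.degree (a 0) : ℝ) / E2 G := by rw [qw]

lemma qw_succ {k : ℕ} (a : Fin (k + 2) → V) :
    qw G (k + 1) a = ((G.degree (Fin.tail a 0) : ℝ))⁻¹ * qw G k (Fin.tail a) := by rw [qw]

lemma qw_cons {k : ℕ} (x : V) (b : Fin (k + 1) → V) :
    qw G (k + 1) (Fin.cons x b) = ((G.degree (b 0) : ℝ))⁻¹ * qw G k b := by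
  rw [qw_succ, Fin.tail_cons]

lemma mem_Wk_succ {k : ℕ} {a : Fin (k + 2) → V} :
    a ∈ Wk G (k + 1) ↔ G.Adj (a 0) (Fin.tail a 0) ∧ Fin.tail a ∈ Wk G k := by
  simp only [Wk, mem_filter, mem_univ, true_and]
  constructor
  · intro h
    refine ⟨h 0, fun i => ?_⟩
    have := h i.succ
    simpa only [Fin.tail, Fin.succ_castSucc] using this
  · rintro ⟨h0, h⟩ i
    refine Fin.cases ?_ (fun j => ?_) i
    · exact h0
    · have := h j
      simpa only [Fin.tail, Fin.succ_castSucc] using this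

lemma sum_Wk_succ {k : ℕ} (g : (Fin (k + 2) → V) → ℝ) :
    ∑ a ∈ Wk G (k + 1), g a
      = ∑ b ∈ Wk G k, ∑ x ∈ nb G (b 0), g (Fin.cons x b) := by
  classical
  have h0 : ∑ a ∈ Wk G (k + 1), g a
      = ∑ a : Fin (k + 2) → V, if a ∈ Wk G (k + 1) then g a else 0 := by
    rw [Finset.sum_ite_mem, Finset.univ_inter]
  rw [h0, ← Equiv.sum_comp (Fin.consEquiv (fun _ : Fin (k + 2) => V))
      (fun a => if a ∈ Wk G (k + 1) then g a else 0)]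
  rw [Fintype.sum_prod_type, Finset.sum_comm]
  have hmain : ∀ b : Fin (k + 1) → V,
      (∑ x : V, if (Fin.consEquiv (fun _ : Fin (k + 2) => V)) (x, b) ∈ Wk G (k + 1) then
          g ((Fin.consEquiv (fun _ : Fin (k + 2) => V)) (x, b)) else 0)
        = if b ∈ Wk G k then ∑ x ∈ nb G (b 0), g (Fin.cons x b) else 0 := by
    intro b
    have hce : ∀ x : V, (Fin.consEquiv (fun _ : Fin (k + 2) => V)) (x, b) = Fin.cons x b :=
      fun x => rfl
    simp only [hce]
    by_cases hb : b ∈ Wk G k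
    · simp only [hb, if_true]
      have hmem : ∀ x : V, (Fin.cons x b ∈ Wk G (k + 1)) ↔ (x ∈ nb G (b 0)) := by
        intro x
        rw [mem_Wk_succ]
        simp only [Fin.cons_zero, Fin.tail_cons, nb, mem_filter, mem_univ, true_and]
        constructor
        · exact fun h => h.1.symm
        · exact fun h => ⟨h.symm, hb⟩
      calc (∑ x : V, if Fin.cons x b ∈ Wk G (k + 1) then g (Fin.cons x b) else 0)
          = ∑ x : V, if x ∈ nb G (b 0) then g (Fin.cons x b) else 0 :=
            Finset.sum_congr rfl (fun x _ => if_congr (hmem x) rfl rfl)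
        _ = ∑ x ∈ nb G (b 0), g (Fin.cons x b) := by
            rw [Finset.sum_ite_mem, Finset.univ_inter]
    · simp only [hb, if_false]
      refine Finset.sum_eq_zero fun x _ => ?_
      rw [if_neg]
      intro hmem'
      exact hb (by simpa using ((mem_Wk_succ G).mp hmem').2)
  rw [Finset.sum_congr rfl (fun b _ => hmain b), Finset.sum_ite_mem, Finset.univ_inter]

lemma sum_nb (f : V → ℝ) :
    ∑ y : V, ∑ x ∈ nb G y, f x = ∑ x : V, (G.degree x : ℝ) * f x := by
  classical
  simp only [nb, Finset.sum_filter]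
  rw [Finset.sum_comm]
  refine Finset.sum_congr rfl fun x _ => ?_
  rw [← Finset.sum_filter, Finset.sum_const]
  have h : Finset.univ.filter (fun y => G.Adj y x) = nb G x := by
    ext y
    simp only [nb, mem_filter, mem_univ, true_and]
    exact ⟨fun h => h.symm, fun h => h.symm⟩
  rw [h, card_nb, nsmul_eq_mul]

lemma marg : ∀ (k : ℕ) (f : V → ℝ),
    ∑ a ∈ Wk G k, qw G k a * f (a 0)
      = ∑ x : V, (G.degree x : ℝ) / E2 G * f x := by
  intro k
  induction k with
  | zero =>
    intro f
    have hW : Wk G 0 = (Finset.univ : Finset (Fin 1 → V)) := by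
      ext a; simp [Wk]
    rw [hW]
    exact Fintype.sum_equiv (Equiv.funUnique (Fin 1) V) _ _ (fun a => rfl)
  | succ k ih =>
    intro f
    rw [sum_Wk_succ]
    have step : ∀ b ∈ Wk G k,
        (∑ x ∈ nb G (b 0), qw G (k + 1) (Fin.cons x b) * f ((Fin.cons x b : Fin (k + 2) → V) 0))
          = qw G k b * (((G.degree (b 0) : ℝ))⁻¹ * ∑ x ∈ nb G (b 0), f x) := by
      intro b _
      calc (∑ x ∈ nb G (b 0), qw G (k + 1) (Fin.cons x b)
              * f ((Fin.cons x b : Fin (k + 2) → V) 0))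
          = ∑ x ∈ nb G (b 0), qw G k b * (((G.degree (b 0) : ℝ))⁻¹ * f x) := by
            refine Finset.sum_congr rfl fun x _ => ?_
            rw [qw_cons, Fin.cons_zero]; ring
        _ = qw G k b * (((G.degree (b 0) : ℝ))⁻¹ * ∑ x ∈ nb G (b 0), f x) := by
            simp only [Finset.mul_sum]
    rw [Finset.sum_congr rfl step,
      ih (fun y => ((G.degree y : ℝ))⁻¹ * ∑ x ∈ nb G y, f x)]
    have h2 : ∀ y : V,
        (G.degree y : ℝ) / E2 G * (((G.degree y : ℝ))⁻¹ * ∑ x ∈ nb G y, f x)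
          = (E2 G)⁻¹ * ∑ x ∈ nb G y, f x := by
      intro y
      by_cases hd : G.degree y = 0
      · have hnb : nb G y = ∅ := by
          apply Finset.card_eq_zero.mp
          rw [card_nb, hd]
        simp [hnb, hd]
      · have hd' : ((G.degree y : ℝ)) ≠ 0 := Nat.cast_ne_zero.mpr hd
        field_simp
    rw [Finset.sum_congr rfl (fun y _ => h2 y), ← Finset.mul_sum, sum_nb]
    rw [Finset.mul_sum]
    refine Finset.sum_congr rfl fun x _ => ?_
    ring

lemma qw_norm (hE : E2 G ≠ 0) (k : ℕ) : ∑ a ∈ Wk G k, qw G k a = 1 := by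
  have h := marg G k (fun _ => 1)
  simp only [mul_one] at h
  rw [h, ← Finset.sum_div]
  have h2 : (∑ x : V, (G.degree x : ℝ)) = E2 G := rfl
  rw [h2, div_self hE]

lemma degree_tail_pos {k : ℕ} {a : Fin (k + 2) → V} (ha : a ∈ Wk G (k + 1)) :
    0 < G.degree (Fin.tail a 0) := by
  obtain ⟨hadj, -⟩ := (mem_Wk_succ G).mp ha
  rw [SimpleGraph.degree_pos_iff_exists_adj]
  exact ⟨a 0, hadj.symm⟩

lemma degree_head_pos {k : ℕ} {a : Fin (k + 2) → V} (ha : a ∈ Wk G (k + 1)) :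
    0 < G.degree (a 0) := by
  obtain ⟨hadj, -⟩ := (mem_Wk_succ G).mp ha
  rw [SimpleGraph.degree_pos_iff_exists_adj]
  exact ⟨Fin.tail a 0, hadj⟩

lemma qw_pos (hE : 0 < E2 G) :
    ∀ (k : ℕ) (a : Fin (k + 2) → V), a ∈ Wk G (k + 1) → 0 < qw G (k + 1) a := by
  intro k
  induction k with
  | zero =>
    intro a ha
    have hd : (0 : ℝ) < (G.degree (Fin.tail a 0) : ℝ) := by
      exact_mod_cast degree_tail_pos G ha
    rw [qw_succ, qw_zero]
    positivity
  | succ k ih =>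
    intro a ha
    have hd : (0 : ℝ) < (G.degree (Fin.tail a 0) : ℝ) := by
      exact_mod_cast degree_tail_pos G ha
    have htail : Fin.tail a ∈ Wk G (k + 1) := ((mem_Wk_succ G).mp ha).2
    rw [qw_succ]
    exact mul_pos (inv_pos.mpr hd) (ih _ htail)

lemma cardV_pos (hE : 0 < E2 G) : 0 < Fintype.card V := by
  rcases Nat.eq_zero_or_pos (Fintype.card V) with h | h
  · have : IsEmpty V := Fintype.card_eq_zero_iff.mp h
    have h0 : E2 G = 0 := by simp [E2]
    rw [h0] at hE
    exact absurd hE (lt_irrefl 0)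
  · exact h

lemma jensen (hE : 0 < E2 G) :
    Real.log (E2 G) - Real.log (Fintype.card V : ℝ)
      ≤ ∑ x : V, (G.degree x : ℝ) / E2 G * Real.log (G.degree x : ℝ) := by
  classical
  have hn : (0 : ℝ) < (Fintype.card V : ℝ) := by exact_mod_cast cardV_pos G hE
  set n : ℝ := (Fintype.card V : ℝ) with hn_def
  set S : Finset V := Finset.univ.filter (fun x => 0 < G.degree x) with hS
  have hd_pos : ∀ x ∈ S, (0 : ℝ) < (G.degree x : ℝ) := by
    intro x hx
    rw [hS, mem_filter] at hx
    exact_mod_cast hx.2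
  have hsum_d : ∑ x ∈ S, (G.degree x : ℝ) = E2 G := by
    rw [hS]
    refine Finset.sum_filter_of_ne fun x _ hx => ?_
    rcases Nat.eq_zero_or_pos (G.degree x) with h | h
    · exact absurd (by rw [h]; exact Nat.cast_zero) hx
    · exact h
  have hsum_pi : ∑ x ∈ S, (G.degree x : ℝ) / E2 G = 1 := by
    rw [← Finset.sum_div, hsum_d, div_self hE.ne']
  have key : ∀ x ∈ S,
      (G.degree x : ℝ) / E2 G * (Real.log (E2 G) - Real.log n - Real.log (G.degree x : ℝ))
        ≤ 1 / n - (G.degree x : ℝ) / E2 G := by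
    intro x hx
    have hdx := hd_pos x hx
    have hlog : Real.log (E2 G) - Real.log n - Real.log (G.degree x : ℝ)
        = Real.log (E2 G / (n * (G.degree x : ℝ))) := by
      rw [Real.log_div hE.ne' (by positivity), Real.log_mul hn.ne' hdx.ne']
      ring
    rw [hlog]
    have h1 : Real.log (E2 G / (n * (G.degree x : ℝ)))
        ≤ E2 G / (n * (G.degree x : ℝ)) - 1 :=
      Real.log_le_sub_one_of_pos (by positivity)
    have hpi : (0 : ℝ) ≤ (G.degree x : ℝ) / E2 G := by positivity
    calc (G.degree x : ℝ) / E2 G * Real.log (E2 G / (n * (G.degree x : ℝ)))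
        ≤ (G.degree x : ℝ) / E2 G * (E2 G / (n * (G.degree x : ℝ)) - 1) :=
          mul_le_mul_of_nonneg_left h1 hpi
      _ = 1 / n - (G.degree x : ℝ) / E2 G := by
          field_simp
  have hsumkey : ∑ x ∈ S, (G.degree x : ℝ) / E2 G
        * (Real.log (E2 G) - Real.log n - Real.log (G.degree x : ℝ))
      ≤ (S.card : ℝ) / n - 1 := by
    calc ∑ x ∈ S, (G.degree x : ℝ) / E2 G
          * (Real.log (E2 G) - Real.log n - Real.log (G.degree x : ℝ))
        ≤ ∑ x ∈ S, (1 / n - (G.degree x : ℝ) / E2 G) := Finset.sum_le_sum key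
      _ = (S.card : ℝ) * (1 / n) - 1 := by
          rw [Finset.sum_sub_distrib, Finset.sum_const, hsum_pi, nsmul_eq_mul]
      _ = (S.card : ℝ) / n - 1 := by ring
  have hcard : (S.card : ℝ) ≤ n := by
    rw [hn_def]
    exact_mod_cast (Finset.card_le_univ S).trans_eq (Finset.card_univ)
  have hsplit : ∑ x ∈ S, (G.degree x : ℝ) / E2 G
        * (Real.log (E2 G) - Real.log n - Real.log (G.degree x : ℝ))
      = (Real.log (E2 G) - Real.log n)
        - ∑ x ∈ S, (G.degree x : ℝ) / E2 G * Real.log (G.degree x : ℝ) := by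
    have : ∀ x ∈ S, (G.degree x : ℝ) / E2 G
          * (Real.log (E2 G) - Real.log n - Real.log (G.degree x : ℝ))
        = (G.degree x : ℝ) / E2 G * (Real.log (E2 G) - Real.log n)
          - (G.degree x : ℝ) / E2 G * Real.log (G.degree x : ℝ) := by
      intro x _; ring
    rw [Finset.sum_congr rfl this, Finset.sum_sub_distrib, ← Finset.sum_mul, hsum_pi, one_mul]
  have hext : ∑ x ∈ S, (G.degree x : ℝ) / E2 G * Real.log (G.degree x : ℝ)
      = ∑ x : V, (G.degree x : ℝ) / E2 G * Real.log (G.degree x : ℝ) := by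
    rw [hS]
    refine Finset.sum_filter_of_ne fun x _ hx => ?_
    rcases Nat.eq_zero_or_pos (G.degree x) with h | h
    · exact absurd (by simp [h]) hx
    · exact h
  rw [hsplit, hext] at hsumkey
  have : (S.card : ℝ) / n - 1 ≤ 0 := by
    rw [sub_nonpos, div_le_one hn]
    exact hcard
  linarith

set_option maxHeartbeats 1000000 in
lemma Lbound (hE : 0 < E2 G) : ∀ k : ℕ,
    ∑ a ∈ Wk G (k + 1), qw G (k + 1) a * Real.log (qw G (k + 1) a)
      ≤ (k : ℝ) * Real.log (Fintype.card V : ℝ) - ((k : ℝ) + 1) * Real.log (E2 G) := by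
  intro k
  induction k with
  | zero =>
    have hq : ∀ a ∈ Wk G 1, qw G 1 a = (E2 G)⁻¹ := by
      intro a ha
      have hd : (0 : ℝ) < (G.degree (Fin.tail a 0) : ℝ) := by
        exact_mod_cast degree_tail_pos G ha
      rw [qw_succ, qw_zero]
      field_simp
    calc ∑ a ∈ Wk G 1, qw G 1 a * Real.log (qw G 1 a)
        = ∑ a ∈ Wk G 1, qw G 1 a * Real.log (E2 G)⁻¹ :=
          Finset.sum_congr rfl (fun a ha => by rw [hq a ha])
      _ = (∑ a ∈ Wk G 1, qw G 1 a) * Real.log (E2 G)⁻¹ := by rw [← Finset.sum_mul]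
      _ = Real.log (E2 G)⁻¹ := by rw [qw_norm G hE.ne' 1, one_mul]
      _ = -Real.log (E2 G) := Real.log_inv _
      _ ≤ ((0 : ℕ) : ℝ) * Real.log (Fintype.card V : ℝ)
            - (((0 : ℕ) : ℝ) + 1) * Real.log (E2 G) := by
          push_cast; simp
  | succ k ih =>
    rw [sum_Wk_succ]
    have step : ∀ b ∈ Wk G (k + 1),
        (∑ x ∈ nb G (b 0),
            qw G (k + 2) (Fin.cons x b) * Real.log (qw G (k + 2) (Fin.cons x b)))
          = qw G (k + 1) b * Real.log (qw G (k + 1) b)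
            - qw G (k + 1) b * Real.log (G.degree (b 0) : ℝ) := by
      intro b hb
      have hD : (0 : ℝ) < (G.degree (b 0) : ℝ) := by
        exact_mod_cast degree_head_pos G hb
      have hc : 0 < qw G (k + 1) b := qw_pos G hE k b hb
      have hq : ∀ x : V, qw G (k + 2) (Fin.cons x b)
          = ((G.degree (b 0) : ℝ))⁻¹ * qw G (k + 1) b := fun x => qw_cons G x b
      rw [Finset.sum_congr rfl (fun x _ => by rw [hq x]), Finset.sum_const, card_nb,
        nsmul_eq_mul, Real.log_mul (inv_ne_zero hD.ne') hc.ne', Real.log_inv]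
      field_simp
      ring
    rw [Finset.sum_congr rfl step, Finset.sum_sub_distrib]
    have hmargs : ∑ b ∈ Wk G (k + 1), qw G (k + 1) b * Real.log (G.degree (b 0) : ℝ)
        = ∑ x : V, (G.degree x : ℝ) / E2 G * Real.log (G.degree x : ℝ) :=
      marg G (k + 1) (fun y => Real.log (G.degree y : ℝ))
    rw [hmargs]
    have hj := jensen G hE
    have hfinal := sub_le_sub ih hj
    calc (∑ a ∈ Wk G (k + 1), qw G (k + 1) a * Real.log (qw G (k + 1) a))
          - ∑ x : V, (G.degree x : ℝ) / E2 G * Real.log (G.degree x : ℝ)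
        ≤ ((k : ℝ) * Real.log (Fintype.card V : ℝ) - ((k : ℝ) + 1) * Real.log (E2 G))
            - (Real.log (E2 G) - Real.log (Fintype.card V : ℝ)) := hfinal
      _ = ((k + 1 : ℕ) : ℝ) * Real.log (Fintype.card V : ℝ)
            - (((k + 1 : ℕ) : ℝ) + 1) * Real.log (E2 G) := by
          push_cast; ring

lemma card_Wk (hE : 0 < E2 G) (k : ℕ) :
    E2 G ^ (k + 1) / (Fintype.card V : ℝ) ^ k ≤ ((Wk G (k + 1)).card : ℝ) := by
  classical
  have hnorm := qw_norm G hE.ne' (k + 1)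
  have hne : (Wk G (k + 1)).Nonempty := by
    by_contra h
    rw [Finset.not_nonempty_iff_eq_empty] at h
    rw [h, Finset.sum_empty] at hnorm
    exact one_ne_zero hnorm.symm
  set N : ℝ := ((Wk G (k + 1)).card : ℝ) with hN
  have hNpos : (0 : ℝ) < N := by
    rw [hN]
    exact_mod_cast Finset.card_pos.mpr hne
  have key : ∀ a ∈ Wk G (k + 1),
      qw G (k + 1) a * (-Real.log (qw G (k + 1) a) - Real.log N)
        ≤ 1 / N - qw G (k + 1) a := by
    intro a ha
    have hq := qw_pos G hE k a ha
    have h1 : Real.log ((qw G (k + 1) a * N)⁻¹) ≤ (qw G (k + 1) a * N)⁻¹ - 1 :=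
      Real.log_le_sub_one_of_pos (by positivity)
    rw [Real.log_inv, Real.log_mul hq.ne' hNpos.ne'] at h1
    calc qw G (k + 1) a * (-Real.log (qw G (k + 1) a) - Real.log N)
        = qw G (k + 1) a * (-(Real.log (qw G (k + 1) a) + Real.log N)) := by ring
      _ ≤ qw G (k + 1) a * ((qw G (k + 1) a * N)⁻¹ - 1) :=
          mul_le_mul_of_nonneg_left h1 hq.le
      _ = 1 / N - qw G (k + 1) a := by
          field_simp
  have hsum : ∑ a ∈ Wk G (k + 1), qw G (k + 1) a
        * (-Real.log (qw G (k + 1) a) - Real.log N)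
      ≤ ∑ a ∈ Wk G (k + 1), (1 / N - qw G (k + 1) a) := Finset.sum_le_sum key
  have hr : ∑ a ∈ Wk G (k + 1), (1 / N - qw G (k + 1) a) = 0 := by
    rw [Finset.sum_sub_distrib, Finset.sum_const, hnorm, nsmul_eq_mul, ← hN]
    field_simp
    norm_num
  have hl : ∑ a ∈ Wk G (k + 1), qw G (k + 1) a
        * (-Real.log (qw G (k + 1) a) - Real.log N)
      = -(∑ a ∈ Wk G (k + 1), qw G (k + 1) a * Real.log (qw G (k + 1) a)) - Real.log N := by
    have : ∀ a ∈ Wk G (k + 1), qw G (k + 1) a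
          * (-Real.log (qw G (k + 1) a) - Real.log N)
        = -(qw G (k + 1) a * Real.log (qw G (k + 1) a))
          - qw G (k + 1) a * Real.log N := by
      intro a _; ring
    rw [Finset.sum_congr rfl this, Finset.sum_sub_distrib, Finset.sum_neg_distrib,
      ← Finset.sum_mul, hnorm, one_mul]
  have hL := Lbound G hE k
  have hlogN : ((k : ℝ) + 1) * Real.log (E2 G) - (k : ℝ) * Real.log (Fintype.card V : ℝ)
      ≤ Real.log N := by
    rw [hl, hr] at hsum
    linarith
  have hn : (0 : ℝ) < (Fintype.card V : ℝ) := by exact_mod_cast cardV_pos G hE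
  have hexp : Real.exp (((k : ℝ) + 1) * Real.log (E2 G)
        - (k : ℝ) * Real.log (Fintype.card V : ℝ))
      = E2 G ^ (k + 1) / (Fintype.card V : ℝ) ^ k := by
    rw [Real.exp_sub]
    have h1 : Real.exp (((k : ℝ) + 1) * Real.log (E2 G)) = E2 G ^ (k + 1) := by
      have : ((k : ℝ) + 1) = ((k + 1 : ℕ) : ℝ) := by push_cast; ring
      rw [this, Real.exp_nat_mul, Real.exp_log hE]
    have h2 : Real.exp ((k : ℝ) * Real.log (Fintype.card V : ℝ))
        = (Fintype.card V : ℝ) ^ k := by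
      rw [Real.exp_nat_mul, Real.exp_log hn]
    rw [h1, h2]
  calc E2 G ^ (k + 1) / (Fintype.card V : ℝ) ^ k
      = Real.exp (((k : ℝ) + 1) * Real.log (E2 G)
          - (k : ℝ) * Real.log (Fintype.card V : ℝ)) := hexp.symm
    _ ≤ Real.exp (Real.log N) := Real.exp_le_exp.mpr hlogN
    _ = N := Real.exp_log hNpos

end BlakleyRoyAux

theorem sum_walkCount {V : Type*} [Fintype V] (G : SimpleGraph V) (m : ℕ) (hm : 1 ≤ m) :
    (∑ x : V, ∑ y : V, walkCount G m x y) = pathHomCount G m ∧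
    (2 * (G.edgeFinset.card : ℝ) / (Fintype.card V : ℝ) ^ 2) ^ m *
        (Fintype.card V : ℝ) ^ (m + 1) ≤ (pathHomCount G m : ℝ) := by
  classical
  constructor
  · -- counting part
    have hfib : pathHomCount G m
        = ∑ p : V × V, (Finset.univ.filter (fun a : Fin (m + 1) → V =>
            a 0 = p.1 ∧ a (Fin.last m) = p.2
              ∧ ∀ i : Fin m, G.Adj (a i.castSucc) (a i.succ))).card := by
      rw [pathHomCount]
      rw [Finset.card_eq_sum_card_fiberwise
        (f := fun a : Fin (m + 1) → V => (a 0, a (Fin.last m)))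
        (t := Finset.univ) (fun a _ => Finset.mem_univ _)]
      refine Finset.sum_congr rfl fun p _ => ?_
      congr 1
      ext a
      simp only [Finset.mem_filter, Finset.mem_univ, true_and, Prod.ext_iff]
      tauto
    rw [hfib, Fintype.sum_prod_type]
    rfl
  · -- inequality part
    have hE2cast : BlakleyRoyAux.E2 G = 2 * (G.edgeFinset.card : ℝ) := by
      have h := SimpleGraph.sum_degrees_eq_twice_card_edges G
      have : BlakleyRoyAux.E2 G = ((∑ v : V, G.degree v : ℕ) : ℝ) := by
        rw [BlakleyRoyAux.E2]; push_cast; rfl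
      rw [this, h]; push_cast; ring
    rcases eq_or_lt_of_le (by positivity : (0 : ℝ) ≤ 2 * (G.edgeFinset.card : ℝ)) with h0 | hpos
    · -- no edges
      rw [← h0, zero_div, zero_pow (by omega : m ≠ 0), zero_mul]
      positivity
    · have hE : 0 < BlakleyRoyAux.E2 G := by rw [hE2cast]; exact hpos
      obtain ⟨k, rfl⟩ : ∃ k, m = k + 1 := ⟨m - 1, by omega⟩
      have hn : (0 : ℝ) < (Fintype.card V : ℝ) := by
        exact_mod_cast BlakleyRoyAux.cardV_pos G hE
      have hcard := BlakleyRoyAux.card_Wk G hE k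
      have hpath : (pathHomCount G (k + 1) : ℝ) = ((BlakleyRoyAux.Wk G (k + 1)).card : ℝ) := rfl
      rw [hpath, ← hE2cast]
      calc (BlakleyRoyAux.E2 G / (Fintype.card V : ℝ) ^ 2) ^ (k + 1)
            * (Fintype.card V : ℝ) ^ (k + 1 + 1)
          = BlakleyRoyAux.E2 G ^ (k + 1) / (Fintype.card V : ℝ) ^ k := by
            rw [div_pow, div_mul_eq_mul_div,
              div_eq_div_iff (by positivity) (by positivity)]
            ring
        _ ≤ ((BlakleyRoyAux.Wk G (k + 1)).card : ℝ) := hcard
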